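/- Let q = 2^h, h > p, r ≥ p, and r ≤ m. The minimum Hamming distance of the linear code ZRM_{2^h}^p(r,m) equals 2^{m-r}; that is, every nonzero codeword has Hamming weight at least 2^{m-r}, and some nonzero codeword has Hamming weight exactly 2^{m-r}. -/

import Mathlib

open Finset

/-- The binary expansion of `i`, as a point of `ℤ₂^m`. -/
def bits (m : ℕ) (i : ℕ) : Fin m → ZMod 2 := fun j => if Nat.testBit i j.val then 1 else 0

/-- Admissibility condition on ANF coefficients for `ZRM_{2^h}^p(r,m)`: monomials of order
at most `r - p` are free, a monomial of order `r - p + i` (for `1 ≤ i ≤ p`) must carry a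
coefficient divisible by `2^i`, and monomials of order exceeding `r` do not occur. -/
def zrmCond (h p r m : ℕ) (c : Finset (Fin m) → ZMod (2 ^ h)) : Prop :=
  ∀ S : Finset (Fin m),
    (r < S.card → c S = 0) ∧
    (r - p < S.card → S.card ≤ r →
      ∃ u : ZMod (2 ^ h), c S = 2 ^ (S.card - (r - p)) * u)

/-- The `ℤ_{2^h}`-valued vector of length `2^m` associated with the generalized Boolean
function with ANF coefficients `c` (monomials indexed by subsets of the variables). -/
def anfVec (h m : ℕ) (c : Finset (Fin m) → ZMod (2 ^ h)) : Fin (2 ^ m) → ZMod (2 ^ h) :=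
  fun i => ∑ S : Finset (Fin m), c S * ∏ α ∈ S, ((bits m i.val α).val : ZMod (2 ^ h))

/-- The code `ZRM_{2^h}^p(r,m)` as a set of vectors of length `2^m` over `ℤ_{2^h}`. -/
def ZRM (h p r m : ℕ) : Set (Fin (2 ^ m) → ZMod (2 ^ h)) :=
  {v | ∃ c : Finset (Fin m) → ZMod (2 ^ h), zrmCond h p r m c ∧ v = anfVec h m c}

/-- Hamming weight: the number of nonzero entries. -/
def wtH {n q : ℕ} (v : Fin n → ZMod q) : ℕ := (Finset.univ.filter fun i => v i ≠ 0).card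

/-- Lee weight: `∑ᵢ min(vᵢ, q - vᵢ)` with entries represented in `[0, q)`. -/
def wtL {n q : ℕ} (v : Fin n → ZMod q) : ℕ := ∑ i : Fin n, min (v i).val (q - (v i).val)


lemma zmod2_cases (a : ZMod 2) : a = 0 ∨ a = 1 := by fin_cases a <;> [exact Or.inl rfl; exact Or.inr rfl]

/-- number of points of the cube with prescribed values on `B` -/
lemma card_prescribed (m : ℕ) (B : Finset (Fin m)) (w : Fin m → ZMod 2) :
    (univ.filter fun x : Fin m → ZMod 2 => ∀ α ∈ B, x α = w α).card = 2 ^ (m - B.card) := by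
  classical
  have h1 : (univ.filter fun x : Fin m → ZMod 2 => ∀ α ∈ B, x α = w α).card
      = Fintype.card {x : Fin m → ZMod 2 // ∀ α ∈ B, x α = w α} :=
    (Fintype.card_subtype _).symm
  rw [h1]
  have e : {x : Fin m → ZMod 2 // ∀ α ∈ B, x α = w α} ≃ ({α : Fin m // α ∉ B} → ZMod 2) :=
    { toFun := fun x β => x.1 β.1
      invFun := fun y => ⟨fun α => if hα : α ∈ B then w α else y ⟨α, hα⟩, by
        intro α hα; simp [hα]⟩
      left_inv := by
        rintro ⟨x, hx⟩
        ext α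
        dsimp only
        split
        · exact (hx α ‹_›).symm
        · rfl
      right_inv := by
        intro y
        funext β
        exact dif_neg β.2 }
  rw [Fintype.card_congr e, Fintype.card_fun]
  rw [Fintype.card_subtype_compl, Fintype.card_coe]
  simp [ZMod]

def evalB {m : ℕ} (b : Finset (Fin m) → ZMod 2) (x : Fin m → ZMod 2) : ZMod 2 :=
  ∑ S : Finset (Fin m), b S * ∏ α ∈ S, x α

lemma prod01 {m : ℕ} (S : Finset (Fin m)) (x : Fin m → ZMod 2) :
    ∏ α ∈ S, x α = if ∀ α ∈ S, x α = 1 then 1 else 0 := by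
  split
  · exact Finset.prod_eq_one ‹_›
  · push_neg at *
    obtain ⟨α, hα, hx⟩ := ‹∃ α ∈ S, x α ≠ 1›
    exact Finset.prod_eq_zero hα ((zmod2_cases (x α)).resolve_right hx)

lemma key_sum {m : ℕ} (b : Finset (Fin m) → ZMod 2) (S : Finset (Fin m))
    (hmax : ∀ T, S.card < T.card → b T = 0) (z : Fin m → ZMod 2) :
    ∑ x ∈ univ.filter (fun x : Fin m → ZMod 2 => ∀ α ∈ Sᶜ, x α = z α), evalB b x = b S := by
  classical
  unfold evalB
  rw [Finset.sum_comm]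
  have inner : ∀ T : Finset (Fin m),
      (∑ x ∈ univ.filter (fun x : Fin m → ZMod 2 => ∀ α ∈ Sᶜ, x α = z α), ∏ α ∈ T, x α)
      = if S ⊆ T then ∏ α ∈ T \ S, z α else 0 := by
    intro T
    have hsplit : ∀ x ∈ univ.filter (fun x : Fin m → ZMod 2 => ∀ α ∈ Sᶜ, x α = z α),
        ∏ α ∈ T, x α = (∏ α ∈ T ∩ S, x α) * ∏ α ∈ T \ S, z α := by
      intro x hx
      rw [Finset.mem_filter] at hx
      rw [← Finset.prod_inter_mul_prod_diff T S x]
      congr 1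
      exact Finset.prod_congr rfl fun α hα => hx.2 α (by simp [Finset.mem_sdiff.mp hα])
    rw [Finset.sum_congr rfl hsplit, ← Finset.sum_mul]
    have hcount : (∑ x ∈ univ.filter (fun x : Fin m → ZMod 2 => ∀ α ∈ Sᶜ, x α = z α),
        ∏ α ∈ T ∩ S, x α) = if S ⊆ T then 1 else 0 := by
      have : ∀ x : Fin m → ZMod 2, ∏ α ∈ T ∩ S, x α = if ∀ α ∈ T ∩ S, x α = 1 then 1 else 0 :=
        fun x => prod01 _ x
      rw [Finset.sum_congr rfl fun x _ => this x, Finset.sum_boole, Finset.filter_filter]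
      have hset : (univ.filter fun x : Fin m → ZMod 2 =>
            (∀ α ∈ Sᶜ, x α = z α) ∧ ∀ α ∈ T ∩ S, x α = 1)
          = univ.filter fun x : Fin m → ZMod 2 =>
            ∀ α ∈ Sᶜ ∪ (T ∩ S), x α = (fun α => if α ∈ S then 1 else z α) α := by
        apply Finset.filter_congr
        intro x _
        simp only [Finset.mem_union, Finset.mem_compl, Finset.mem_inter, eq_iff_iff]
        constructor
        · rintro ⟨h1, h2⟩ α hα
          rcases hα with hα | hα
          · rw [if_neg hα]
            exact h1 α hα
          · rw [if_pos hα.2]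
            exact h2 α hα
        · intro hh
          constructor
          · intro α hα
            have := hh α (Or.inl hα)
            rwa [if_neg hα] at this
          · intro α hα
            have := hh α (Or.inr hα)
            rwa [if_pos hα.2] at this
      rw [hset, card_prescribed]
      have hdisj : Disjoint Sᶜ (T ∩ S) := by
        rw [Finset.disjoint_left]
        intro a ha ha'
        exact (Finset.mem_compl.mp ha) (Finset.mem_inter.mp ha').2
      have hcard : (Sᶜ ∪ (T ∩ S)).card = (m - S.card) + (T ∩ S).card := by
        rw [Finset.card_union_of_disjoint hdisj, Finset.card_compl]
        simp
      have hSm : S.card ≤ m := by simpa using Finset.card_le_card (Finset.subset_univ S)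
      have hTS : (T ∩ S).card ≤ S.card := Finset.card_le_card (Finset.inter_subset_right)
      have hexp : m - (Sᶜ ∪ (T ∩ S)).card = S.card - (T ∩ S).card := by omega
      rw [hexp]
      have h2 : ((2 : ℕ) : ZMod 2) = 0 := by decide
      by_cases hsub : S ⊆ T
      · have : T ∩ S = S := by
          rw [Finset.inter_eq_right]; exact hsub
        rw [if_pos hsub, this]
        simp
      · have hlt : (T ∩ S).card < S.card := by
          rcases lt_or_eq_of_le hTS with h | h
          · exact h
          · exact absurd (Finset.inter_eq_right.mp
              (Finset.eq_of_subset_of_card_le Finset.inter_subset_right h.ge)) hsub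
        rw [if_neg hsub]
        have : S.card - (T ∩ S).card ≠ 0 := by omega
        obtain ⟨k, hk⟩ : ∃ k, S.card - (T ∩ S).card = k + 1 := ⟨_, (Nat.succ_pred_eq_of_pos (by omega)).symm⟩
        rw [hk]
        push_cast
        rw [pow_succ, (by decide : (2:ZMod 2) = 0), mul_zero]
    rw [hcount]
    by_cases hsub : S ⊆ T
    · rw [if_pos hsub, if_pos hsub, one_mul]
    · rw [if_neg hsub, if_neg hsub, zero_mul]
  have : ∀ T ∈ (univ : Finset (Finset (Fin m))),
      (∑ x ∈ univ.filter (fun x : Fin m → ZMod 2 => ∀ α ∈ Sᶜ, x α = z α), b T * ∏ α ∈ T, x α)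
      = b T * if S ⊆ T then ∏ α ∈ T \ S, z α else 0 := by
    intro T _
    rw [← Finset.mul_sum, inner T]
  rw [Finset.sum_congr rfl this]
  rw [Finset.sum_eq_single S]
  · simp
  · intro T _ hTS
    by_cases hsub : S ⊆ T
    · have : S ⊂ T := Finset.ssubset_iff_subset_ne.mpr ⟨hsub, (Ne.symm hTS)⟩
      rw [hmax T (Finset.card_lt_card this), zero_mul]
    · rw [if_neg hsub, mul_zero]
  · intro hS
    exact absurd (Finset.mem_univ S) hS

lemma rm_lb (m r : ℕ) (hrm : r ≤ m) (b : Finset (Fin m) → ZMod 2)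
    (hdeg : ∀ S, r < S.card → b S = 0) (hb : ∃ S, b S ≠ 0) :
    2 ^ (m - r) ≤ (univ.filter fun x : Fin m → ZMod 2 => evalB b x ≠ 0).card := by
  classical
  obtain ⟨S₁, hS₁⟩ := hb
  have hne : (univ.filter fun S : Finset (Fin m) => b S ≠ 0).Nonempty :=
    ⟨S₁, by simp [hS₁]⟩
  obtain ⟨S, hSmem, hSmax⟩ := Finset.exists_max_image _ (fun S => S.card) hne
  rw [Finset.mem_filter] at hSmem
  have hbS : b S ≠ 0 := hSmem.2
  have hmax : ∀ T, S.card < T.card → b T = 0 := by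
    intro T hT
    by_contra hbT
    exact absurd (hSmax T (by simp [hbT])) (by omega)
  have hdS : S.card ≤ r := by
    by_contra hc
    exact hbS (hdeg S (by omega))
  -- for each z there is a point agreeing with z off S where evalB is nonzero
  have hex : ∀ z : Fin m → ZMod 2, ∃ x, (∀ α ∈ Sᶜ, x α = z α) ∧ evalB b x ≠ 0 := by
    intro z
    have := key_sum b S hmax z
    have hsum : (∑ x ∈ univ.filter (fun x : Fin m → ZMod 2 => ∀ α ∈ Sᶜ, x α = z α),
        evalB b x) ≠ 0 := this ▸ hbS
    obtain ⟨x, hx1, hx2⟩ := Finset.exists_ne_zero_of_sum_ne_zero hsum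
    exact ⟨x, (Finset.mem_filter.mp hx1).2, hx2⟩
  choose f hf1 hf2 using hex
  have h1 : (univ.filter fun z : Fin m → ZMod 2 => ∀ α ∈ S, z α = 0).card
      = 2 ^ (m - S.card) := by
    have := card_prescribed m S (fun _ => 0)
    simpa using this
  have h2 : (univ.filter fun z : Fin m → ZMod 2 => ∀ α ∈ S, z α = 0).card
      ≤ (univ.filter fun x : Fin m → ZMod 2 => evalB b x ≠ 0).card := by
    apply Finset.card_le_card_of_injOn f
    · intro z hz
      simp [hf2 z]
    · intro z1 hz1 z2 hz2 heq
      rw [Finset.coe_filter] at hz1 hz2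
      simp only [Set.mem_setOf_eq] at hz1 hz2
      funext α
      by_cases hα : α ∈ S
      · rw [hz1.2 α hα, hz2.2 α hα]
      · have e1 := hf1 z1 α (Finset.mem_compl.mpr hα)
        have e2 := hf1 z2 α (Finset.mem_compl.mpr hα)
        rw [← e1, ← e2, heq]
  rw [h1] at h2
  have h3 : 2 ^ (m - r) ≤ 2 ^ (m - S.card) :=
    Nat.pow_le_pow_right (by norm_num) (Nat.sub_le_sub_left hdS m)
  exact le_trans h3 h2

lemma bits_bijective (m : ℕ) : Function.Bijective (fun i : Fin (2 ^ m) => bits m i.val) := by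
  rw [Fintype.bijective_iff_injective_and_card]
  constructor
  · intro i j hij
    apply Fin.ext
    apply Nat.eq_of_testBit_eq
    intro k
    by_cases hk : k < m
    · have := congrFun hij ⟨k, hk⟩
      unfold bits at this
      by_cases h1 : Nat.testBit i.val k <;> by_cases h2 : Nat.testBit j.val k <;>
        simp [h1, h2] at this ⊢
    · have hi : Nat.testBit i.val k = false :=
        Nat.testBit_lt_two_pow (lt_of_lt_of_le i.isLt (Nat.pow_le_pow_right (by norm_num) (by omega)))
      have hj : Nat.testBit j.val k = false :=
        Nat.testBit_lt_two_pow (lt_of_lt_of_le j.isLt (Nat.pow_le_pow_right (by norm_num) (by omega)))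
      rw [hi, hj]
  · simp only [Fintype.card_fun, ZMod.card, Fintype.card_fin]

lemma card_transfer (m : ℕ) (P : (Fin m → ZMod 2) → Prop) [DecidablePred P] :
    (univ.filter fun i : Fin (2 ^ m) => P (bits m i.val)).card
      = (univ.filter fun x : Fin m → ZMod 2 => P x).card := by
  apply Finset.card_bij (fun i _ => bits m i.val)
  · intro i hi
    rw [Finset.mem_filter] at hi ⊢
    exact ⟨Finset.mem_univ _, hi.2⟩
  · intro i _ j _ hij
    exact (bits_bijective m).1 hij
  · intro x hx
    obtain ⟨i, hi⟩ := (bits_bijective m).2 x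
    exact ⟨i, Finset.mem_filter.mpr ⟨Finset.mem_univ _, by simp only at hi; rw [hi]; exact (Finset.mem_filter.mp hx).2⟩, hi⟩

lemma two_pow_cast_ne_zero (h k : ℕ) (hk : k < h) : ((2 ^ k : ℕ) : ZMod (2 ^ h)) ≠ 0 := by
  haveI : NeZero (2 ^ h) := ⟨by positivity⟩
  intro hz
  rw [ZMod.natCast_eq_zero_iff, Nat.pow_dvd_pow_iff_le_right (by norm_num)] at hz
  omega

lemma double_zero (h : ℕ) (hh : 0 < h) (x : ZMod (2 ^ h)) (hx : 2 * x = 0) :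
    x = 0 ∨ x = ((2 ^ (h - 1) : ℕ) : ZMod (2 ^ h)) := by
  haveI : NeZero (2 ^ h) := ⟨by positivity⟩
  have hval : ((x.val : ℕ) : ZMod (2 ^ h)) = x := ZMod.natCast_rightInverse x
  have hlt : x.val < 2 ^ h := ZMod.val_lt x
  have h0 : ((2 * x.val : ℕ) : ZMod (2 ^ h)) = 0 := by push_cast; rw [hval]; exact hx
  rw [ZMod.natCast_eq_zero_iff] at h0
  obtain ⟨c, hc⟩ := h0
  have hpow : 2 ^ h = 2 * 2 ^ (h - 1) := by
    rw [← pow_succ']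
    congr 1
    omega
  have hc2 : c < 2 := by nlinarith [(show 0 < 2 ^ h by positivity), pow_pos (show 0 < 2 by norm_num) h]
  interval_cases c
  · left
    rw [← hval]
    have : x.val = 0 := by omega
    rw [this]; simp
  · right
    rw [← hval]
    congr 1
    omega

lemma prodcast (h m : ℕ) (S : Finset (Fin m)) (x : Fin m → ZMod 2) :
    ∏ α ∈ S, ((x α).val : ZMod (2 ^ h))
      = (((if ∀ α ∈ S, x α = 1 then 1 else 0 : ℕ)) : ZMod (2 ^ h)) := by
  split
  · rw [Nat.cast_one]
    apply Finset.prod_eq_one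
    intro α hα
    rw [‹∀ α ∈ S, x α = 1› α hα, (by decide : (1 : ZMod 2).val = 1), Nat.cast_one]
  · push_neg at *
    obtain ⟨α, hα, hxα⟩ := ‹∃ α ∈ S, x α ≠ 1›
    have : x α = 0 := (zmod2_cases (x α)).resolve_right hxα
    rw [Nat.cast_zero]
    apply Finset.prod_eq_zero hα
    rw [this]
    simp

lemma anf_lb (h m r : ℕ) (hh : 0 < h) (hrm : r ≤ m) (c : Finset (Fin m) → ZMod (2 ^ h))
    (hdeg : ∀ S, r < S.card → c S = 0) (hv : anfVec h m c ≠ 0) :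
    2 ^ (m - r) ≤ wtH (anfVec h m c) := by
  classical
  haveI : NeZero (2 ^ h) := ⟨by positivity⟩
  -- c is nonzero
  have hc : ∃ S, c S ≠ 0 := by
    by_contra hall
    push_neg at hall
    apply hv
    funext i
    unfold anfVec
    simp [hall]
  -- minimal t such that 2^(h-1-t) • c ≠ 0
  have hQ : ∃ t, ∃ S, (2 : ZMod (2 ^ h)) ^ (h - 1 - t) * c S ≠ 0 := by
    obtain ⟨S, hS⟩ := hc
    exact ⟨h - 1, S, by simpa using hS⟩
  set t := Nat.find hQ with ht
  obtain ⟨S₁, hS₁⟩ := Nat.find_spec hQ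
  have hmin : ∀ j < t, ∀ S, (2 : ZMod (2 ^ h)) ^ (h - 1 - j) * c S = 0 := by
    intro j hj S
    have := Nat.find_min hQ hj
    push_neg at this
    exact this S
  have hth : t ≤ h - 1 := Nat.find_le (by
    obtain ⟨S, hS⟩ := hc
    exact ⟨S, by simpa using hS⟩)
  set a : Finset (Fin m) → ZMod (2 ^ h) := fun S => (2 : ZMod (2 ^ h)) ^ (h - 1 - t) * c S with ha
  have htwo : ∀ S, 2 * a S = 0 := by
    intro S
    have hstep : (2 : ZMod (2 ^ h)) * 2 ^ (h - 1 - t) = 2 ^ (h - 1 - t + 1) := (pow_succ' 2 _).symm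
    rw [ha]
    dsimp only
    rw [← mul_assoc, hstep]
    rcases Nat.eq_zero_or_pos t with ht0 | ht0
    · have : h - 1 - t + 1 = h := by omega
      rw [this]
      have : ((2 : ZMod (2 ^ h)) ^ h) = ((2 ^ h : ℕ) : ZMod (2 ^ h)) := by push_cast; ring
      rw [this, ZMod.natCast_self, zero_mul]
    · have : h - 1 - t + 1 = h - 1 - (t - 1) := by omega
      rw [this]
      exact hmin (t - 1) (by omega) S
  have dich : ∀ S, a S = 0 ∨ a S = ((2 ^ (h - 1) : ℕ) : ZMod (2 ^ h)) :=
    fun S => double_zero h hh (a S) (htwo S)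
  set b : Finset (Fin m) → ZMod 2 := fun S => if a S = 0 then 0 else 1 with hb
  have hab : ∀ S, a S = ((2 ^ (h - 1) : ℕ) : ZMod (2 ^ h)) * (((b S).val : ℕ) : ZMod (2 ^ h)) := by
    intro S
    rcases dich S with h0 | h1
    · rw [h0, hb]
      simp [h0]
    · rw [h1, hb]
      have hne : a S ≠ 0 := by
        rw [h1]
        exact two_pow_cast_ne_zero h (h - 1) (by omega)
      simp only [if_neg hne]
      rw [(by decide : (1 : ZMod 2).val = 1)]
      simp
  -- natural number counter
  set N : (Fin m → ZMod 2) → ℕ :=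
    fun x => ∑ S : Finset (Fin m), (b S).val * (if ∀ α ∈ S, x α = 1 then 1 else 0) with hN
  have w_eq : ∀ i : Fin (2 ^ m),
      (2 : ZMod (2 ^ h)) ^ (h - 1 - t) * anfVec h m c i
        = ((2 ^ (h - 1) : ℕ) : ZMod (2 ^ h)) * ((N (bits m i.val) : ℕ) : ZMod (2 ^ h)) := by
    intro i
    unfold anfVec
    rw [Finset.mul_sum, hN]
    dsimp only
    push_cast
    rw [Finset.mul_sum]
    apply Finset.sum_congr rfl
    intro S _
    rw [← mul_assoc]
    have : (2 : ZMod (2 ^ h)) ^ (h - 1 - t) * c S = a S := rfl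
    rw [this, hab S, prodcast h m S (bits m i.val)]
    push_cast
    ring
  have eval_eq : ∀ x : Fin m → ZMod 2, evalB b x = ((N x : ℕ) : ZMod 2) := by
    intro x
    unfold evalB
    rw [hN]
    dsimp only
    rw [Nat.cast_sum]
    apply Finset.sum_congr rfl
    intro S _
    rw [prod01 S x, Nat.cast_mul,
      show (((b S).val : ℕ) : ZMod 2) = b S from ZMod.natCast_rightInverse (b S)]
    split <;> simp
  -- main implication
  have himp : ∀ i : Fin (2 ^ m), evalB b (bits m i.val) ≠ 0 → anfVec h m c i ≠ 0 := by
    intro i hev hzero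
    have h1 : (2 : ZMod (2 ^ h)) ^ (h - 1 - t) * anfVec h m c i = 0 := by rw [hzero, mul_zero]
    rw [w_eq i] at h1
    -- N is odd
    have hodd : ¬ (2 ∣ N (bits m i.val)) := by
      intro hd
      apply hev
      rw [eval_eq, ZMod.natCast_eq_zero_iff]
      exact hd
    -- 2^(h-1) * N ≠ 0 in ZMod (2^h)
    have : ((2 ^ (h - 1) * N (bits m i.val) : ℕ) : ZMod (2 ^ h)) = 0 := by
      exact_mod_cast h1
    rw [ZMod.natCast_eq_zero_iff] at this
    obtain ⟨e, he⟩ := this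
    have hpow : 2 ^ h = 2 ^ (h - 1) * 2 := by
      rw [← pow_succ]
      congr 1
      omega
    rw [hpow, mul_assoc] at he
    have : N (bits m i.val) = 2 * e := by
      have hp : 0 < 2 ^ (h - 1) := by positivity
      exact Nat.eq_of_mul_eq_mul_left hp he
    exact hodd ⟨e, this⟩
  -- cardinality chain
  have hsub : (univ.filter fun i : Fin (2 ^ m) => evalB b (bits m i.val) ≠ 0)
      ⊆ (univ.filter fun i : Fin (2 ^ m) => anfVec h m c i ≠ 0) := by
    intro i hi
    rw [Finset.mem_filter] at hi ⊢
    exact ⟨hi.1, himp i hi.2⟩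
  have hbdeg : ∀ S, r < S.card → b S = 0 := by
    intro S hS
    rw [hb]
    dsimp only
    rw [ha]
    simp [hdeg S hS]
  have hbne : ∃ S, b S ≠ 0 := by
    refine ⟨S₁, ?_⟩
    rw [hb]
    dsimp only
    rw [if_neg hS₁]
    norm_num
  have h1 := rm_lb m r hrm b hbdeg hbne
  rw [← card_transfer m (fun x => evalB b x ≠ 0)] at h1
  calc 2 ^ (m - r) ≤ _ := h1
    _ ≤ _ := Finset.card_le_card hsub

/-- The minimum Hamming distance of the linear code `ZRM_{2^h}^p(r,m)` equals `2^{m-r}`. -/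
theorem stmt_6 (h p r m : ℕ) (hph : p < h) (hpr : p ≤ r) (hrm : r ≤ m) :
    (∀ v ∈ ZRM h p r m, v ≠ 0 → 2 ^ (m - r) ≤ wtH v) ∧
    (∃ v ∈ ZRM h p r m, v ≠ 0 ∧ wtH v = 2 ^ (m - r)) := by
  constructor
  · rintro v ⟨c, hcond, rfl⟩ hv
    exact anf_lb h m r (by omega) hrm c (fun S hS => (hcond S).1 hS) hv
  · classical
    haveI : NeZero (2 ^ h) := ⟨by positivity⟩
    obtain ⟨S₀, -, hcard⟩ := Finset.exists_subset_card_eq (s := (univ : Finset (Fin m))) (n := r) (by simpa using hrm)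
    set c : Finset (Fin m) → ZMod (2 ^ h) :=
      fun S => if S = S₀ then (2 : ZMod (2 ^ h)) ^ p else 0 with hc
    have hcond : zrmCond h p r m c := by
      intro S
      constructor
      · intro hS
        rw [hc]
        dsimp only
        rw [if_neg]
        intro hSS
        rw [hSS, hcard] at hS
        omega
      · intro h1 h2
        by_cases heq : S = S₀
        · refine ⟨1, ?_⟩
          rw [hc]
          dsimp only
          rw [if_pos heq, mul_one]
          congr 1
          rw [heq, hcard]
          omega
        · exact ⟨0, by rw [hc]; dsimp only; rw [if_neg heq, mul_zero]⟩
    have hp2 : ((2 : ZMod (2 ^ h)) ^ p) ≠ 0 := by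
      have := two_pow_cast_ne_zero h p hph
      intro hz
      apply this
      push_cast
      exact hz
    have v_eq : ∀ i : Fin (2 ^ m), anfVec h m c i
        = (2 : ZMod (2 ^ h)) ^ p *
          (((if ∀ α ∈ S₀, bits m i.val α = 1 then 1 else 0 : ℕ)) : ZMod (2 ^ h)) := by
      intro i
      unfold anfVec
      rw [Finset.sum_eq_single S₀]
      · rw [hc]
        dsimp only
        rw [if_pos rfl, prodcast h m S₀ (bits m i.val)]
      · intro T _ hT
        rw [hc]
        dsimp only
        rw [if_neg hT, zero_mul]
      · intro hS
        exact absurd (Finset.mem_univ S₀) hS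
    have hwt : wtH (anfVec h m c) = 2 ^ (m - r) := by
      unfold wtH
      have hfe : (univ.filter fun i : Fin (2 ^ m) => anfVec h m c i ≠ 0)
          = univ.filter fun i : Fin (2 ^ m) => (∀ α ∈ S₀, bits m i.val α = 1) := by
        apply Finset.filter_congr
        intro i _
        rw [v_eq i]
        by_cases hco : ∀ α ∈ S₀, bits m i.val α = 1
        · simp [hco, hp2]
        · simp [hco]
      rw [hfe, card_transfer m (fun x => ∀ α ∈ S₀, x α = 1),
        card_prescribed m S₀ (fun _ => 1), hcard]
    refine ⟨anfVec h m c, ⟨c, hcond, rfl⟩, ?_, hwt⟩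
    intro hzero
    have : wtH (anfVec h m c) = 0 := by rw [hzero]; unfold wtH; simp
    rw [hwt] at this
    have : 0 < 2 ^ (m - r) := by positivity
    omega
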